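/- Let T be the dynamic-programming table defined by: T[{P_1}, k] = Σ_{s=1}^{k} c(J_{1,s}) for k ≤ p(1), T[{P_1}, k] = ∞ for k > p(1), and for ℓ > 1, T[{P_1,...,P_ℓ}, j] = min over 0 ≤ k ≤ min(j, p(ℓ)) of T[{P_1,...,P_{ℓ-1}}, j-k] + Σ_{s=1}^{k} c(J_{ℓ,s}). Then T[{P_1,...,P_ℓ}, j] equals the minimum cost of scheduling j jobs from the jobs on paths P_1, ..., P_ℓ respecting the precedence constraints (and is ∞ if no such schedule exists). -/

import Mathlib

open scoped ENat

/-- The dynamic-programming table for Path Schedule: `pathDP p c ℓ j` is the value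
`T[{P_1,…,P_ℓ}, j]` (paths indexed `0,…,ℓ-1`), with values in `ℕ∞`. -/
noncomputable def pathDP (p : ℕ → ℕ) (c : ℕ → ℕ → ℕ) : ℕ → ℕ → ℕ∞
  | 0, j => if j = 0 then 0 else ⊤
  | ℓ + 1, j =>
      ⨅ k ∈ Finset.range (min j (p ℓ) + 1),
        pathDP p c ℓ (j - k) + ∑ s ∈ Finset.range k, (c ℓ s : ℕ∞)

/-- Correctness of the dynamic programming recurrence: `pathDP p c ℓ j` equals the
minimum cost of scheduling `j` jobs from paths `P_1,…,P_ℓ` respecting the precedence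
constraints (equivalently, by the prefix property, over choices of prefix lengths
`k i ≤ p i` summing to `j`), and is `⊤` if no such schedule exists. -/
theorem pathDP_correct (p : ℕ → ℕ) (c : ℕ → ℕ → ℕ) (ℓ j : ℕ) :
    pathDP p c ℓ j =
      sInf {C : ℕ∞ | ∃ k : ℕ → ℕ, (∀ i, k i ≤ p i) ∧ (∀ i, ℓ ≤ i → k i = 0) ∧
        (∑ i ∈ Finset.range ℓ, k i) = j ∧
        C = ∑ i ∈ Finset.range ℓ, ∑ s ∈ Finset.range (k i), (c i s : ℕ∞)} := by
  induction ℓ generalizing j with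
  | zero =>
    rw [pathDP]
    split_ifs with hj
    · subst hj
      exact le_antisymm zero_le
        (sInf_le ⟨fun _ => 0, fun i => Nat.zero_le _, fun i _ => rfl, by simp, by simp⟩)
    · rw [eq_comm, sInf_eq_top]
      rintro C ⟨k, -, -, hsum, -⟩
      simp only [Finset.range_zero, Finset.sum_empty] at hsum
      exact absurd hsum.symm hj
  | succ ℓ IH =>
    rw [pathDP]
    refine le_antisymm (le_sInf ?_) ?_
    · rintro C ⟨k, hk, hk0, hsum, rfl⟩
      have hkℓj : k ℓ ≤ j := by
        rw [← hsum]
        exact Finset.single_le_sum (f := k) (fun i _ => Nat.zero_le _)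
          (Finset.self_mem_range_succ ℓ)
      have hmem : k ℓ ∈ Finset.range (min j (p ℓ) + 1) := by
        rw [Finset.mem_range, Nat.lt_succ_iff, le_min_iff]
        exact ⟨hkℓj, hk ℓ⟩
      refine iInf₂_le_of_le (k ℓ) hmem ?_
      rw [IH]
      have hsum' : ∑ i ∈ Finset.range ℓ, k i = j - k ℓ := by
        rw [Finset.sum_range_succ] at hsum; omega
      have hle : sInf {C : ℕ∞ | ∃ k' : ℕ → ℕ, (∀ i, k' i ≤ p i) ∧ (∀ i, ℓ ≤ i → k' i = 0) ∧
          (∑ i ∈ Finset.range ℓ, k' i) = j - k ℓ ∧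
          C = ∑ i ∈ Finset.range ℓ, ∑ s ∈ Finset.range (k' i), (c i s : ℕ∞)} ≤
          ∑ i ∈ Finset.range ℓ, ∑ s ∈ Finset.range (k i), (c i s : ℕ∞) := by
        refine sInf_le ⟨Function.update k ℓ 0, ?_, ?_, ?_, ?_⟩
        · intro i
          by_cases h : i = ℓ
          · subst h; rw [Function.update_self]; exact Nat.zero_le _
          · rw [Function.update_of_ne h]; exact hk i
        · intro i hi
          by_cases h : i = ℓ
          · subst h; rw [Function.update_self]
          · rw [Function.update_of_ne h]; exact hk0 i (by omega)
        · exact (Finset.sum_congr rfl fun i hi =>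
            Function.update_of_ne (show i ≠ ℓ from by
              have := Finset.mem_range.mp hi; omega) 0 k).trans hsum'
        · exact (Finset.sum_congr rfl fun i hi => by
            rw [Function.update_of_ne (show i ≠ ℓ from by
              have := Finset.mem_range.mp hi; omega)]).symm
      calc sInf _ + ∑ s ∈ Finset.range (k ℓ), (c ℓ s : ℕ∞)
          ≤ (∑ i ∈ Finset.range ℓ, ∑ s ∈ Finset.range (k i), (c i s : ℕ∞)) +
            ∑ s ∈ Finset.range (k ℓ), (c ℓ s : ℕ∞) := add_le_add_left hle _
        _ = _ := (Finset.sum_range_succ _ ℓ).symm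
    · refine le_iInf₂ ?_
      intro k hk
      rw [Finset.mem_range, Nat.lt_succ_iff, le_min_iff] at hk
      rw [IH]
      by_cases hne : {C : ℕ∞ | ∃ k' : ℕ → ℕ, (∀ i, k' i ≤ p i) ∧ (∀ i, ℓ ≤ i → k' i = 0) ∧
          (∑ i ∈ Finset.range ℓ, k' i) = j - k ∧
          C = ∑ i ∈ Finset.range ℓ, ∑ s ∈ Finset.range (k' i), (c i s : ℕ∞)}.Nonempty
      · obtain ⟨k', hk'p, hk'0, hk'sum, hC⟩ := csInf_mem hne
        refine sInf_le ⟨Function.update k' ℓ k, ?_, ?_, ?_, ?_⟩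
        · intro i
          by_cases h : i = ℓ
          · subst h; rw [Function.update_self]; exact hk.2
          · rw [Function.update_of_ne h]; exact hk'p i
        · intro i hi
          rw [Function.update_of_ne (by omega)]
          exact hk'0 i (by omega)
        · rw [Finset.sum_range_succ, Function.update_self,
            Finset.sum_congr rfl fun i hi => Function.update_of_ne (show i ≠ ℓ from by
              have := Finset.mem_range.mp hi; omega) k k',
            hk'sum]
          omega
        · rw [Finset.sum_range_succ, Function.update_self, hC]
          congr 1
          exact Finset.sum_congr rfl fun i hi => by
            rw [Function.update_of_ne (show i ≠ ℓ from by
              have := Finset.mem_range.mp hi; omega)]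
      · rw [Set.not_nonempty_iff_eq_empty.mp hne, sInf_empty, top_add]
        exact le_top
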